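/- Let F be a finite field of odd characteristic with τ = 1, ε = 1, i.e., B a non-degenerate symmetric bilinear form on an F-vector space V, and let V = V₊ ⊕ V₀ ⊕ V₋ be a Witt decomposition with V₀ anisotropic for Q(v) = B(v,v). If −1 is a square in F×, then any orthogonal basis {v} of V₀ has the property that the values Q(v) lie in pairwise distinct square classes of F×; consequently |basis of V₀| ≤ 2. -/

import Mathlib

/-- In a Witt decomposition over a finite field of odd characteristic in which `-1`
is a square, the diagonal values of an orthogonal basis of the anisotropic part lie
in pairwise distinct square classes; hence the anisotropic part has dimension at most 2. -/
theorem stmt_2 (F : Type*) [Field F] [Fintype F]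
    (p : ℕ) [Fact p.Prime] (hp : Odd p) [CharP F p]
    (V : Type*) [AddCommGroup V] [Module F V] [FiniteDimensional F V]
    (B : V →ₗ[F] V →ₗ[F] F)
    (hsymm : ∀ v w, B v w = B w v)
    (hnd : ∀ v, (∀ w, B v w = 0) → v = 0)
    (Vp V0 Vm : Submodule F V)
    (hinternal : DirectSum.IsInternal ![Vp, V0, Vm])
    (hisoP : ∀ v ∈ Vp, B v v = 0)
    (hisoM : ∀ v ∈ Vm, B v v = 0)
    (haniso : ∀ v ∈ V0, B v v = 0 → v = 0)
    (hperp : ∀ v ∈ V0, ∀ w : V, (w ∈ Vp ∨ w ∈ Vm) → B v w = 0)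
    (hsq : IsSquare (-1 : F))
    (ι : Type*) [Fintype ι] (b : Module.Basis ι F V0)
    (horth : ∀ i j, i ≠ j → B (↑(b i)) (↑(b j)) = 0) :
    (∀ i j, i ≠ j → ¬ ∃ c : F, c ≠ 0 ∧
        B (↑(b j)) (↑(b j)) = c ^ 2 * B (↑(b i)) (↑(b i))) ∧
    Fintype.card ι ≤ 2 := by
  classical
  obtain ⟨s, hs⟩ := hsq
  have key : ∀ i j, i ≠ j → ¬ ∃ c : F, c ≠ 0 ∧
      B (↑(b j)) (↑(b j)) = c ^ 2 * B (↑(b i)) (↑(b i)) := by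
    intro i j hij ⟨c, hc, hQ⟩
    set w : V := ↑(b j) + (s * c) • ↑(b i) with hw
    have hmem : w ∈ V0 := V0.add_mem (b j).2 (V0.smul_mem _ (b i).2)
    have hz : B w w = 0 := by
      simp only [hw, map_add, map_smul, LinearMap.add_apply, LinearMap.smul_apply,
        smul_eq_mul]
      rw [horth i j hij, horth j i hij.symm, hQ]
      linear_combination (-(c ^ 2 * B (↑(b i)) (↑(b i)))) * hs
    have hw0 : w = 0 := haniso _ hmem hz
    have h0 : (b j + (s * c) • b i : V0) = 0 := by
      apply Subtype.ext
      simpa using hw0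
    have := congrArg (fun x => b.repr x j) h0
    simp [Module.Basis.repr_self, Finsupp.single_apply, hij, Ne.symm hij] at this
  refine ⟨key, ?_⟩
  have hQ0 : ∀ i, B (↑(b i)) (↑(b i)) ≠ 0 := by
    intro i h
    have h1 : (↑(b i) : V) = 0 := haniso _ (b i).2 h
    exact b.ne_zero i (Subtype.ext h1)
  by_contra hcard
  push_neg at hcard
  set f : ι → ℤ := fun i => quadraticChar F (B (↑(b i)) (↑(b i))) with hf
  have hmaps : ∀ i ∈ Finset.univ, f i ∈ ({1, -1} : Finset ℤ) := by
    intro i _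
    have := quadraticChar_dichotomy (hQ0 i)
    simp only [Finset.mem_insert, Finset.mem_singleton]
    exact this
  obtain ⟨i, -, j, -, hij, hfeq⟩ :=
    Finset.exists_ne_map_eq_of_card_lt_of_maps_to (by simpa using hcard) hmaps
  have hfi : f i = 1 ∨ f i = -1 := quadraticChar_dichotomy (hQ0 i)
  have hχ : quadraticChar F (B (↑(b i)) (↑(b i)) * B (↑(b j)) (↑(b j))) = 1 := by
    rw [map_mul]
    rcases hfi with h1 | h1 <;>
      simp only [hf] at h1 hfeq ⊢ <;> rw [h1, ← hfeq, h1] <;> norm_num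
  have hsqij : IsSquare (B (↑(b i)) (↑(b i)) * B (↑(b j)) (↑(b j))) :=
    (quadraticChar_one_iff_isSquare (mul_ne_zero (hQ0 i) (hQ0 j))).mp hχ
  obtain ⟨r, hr⟩ := hsqij
  have hr0 : r ≠ 0 := by
    intro h
    rw [h, mul_zero] at hr
    exact mul_ne_zero (hQ0 i) (hQ0 j) hr
  refine key i j hij ⟨r * (B (↑(b i)) (↑(b i)))⁻¹, mul_ne_zero hr0 (inv_ne_zero (hQ0 i)), ?_⟩
  have hQi := hQ0 i
  field_simp
  linear_combination hr
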